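/- Let S ⊆ ℝ^d, v ≥ u > 0, Γ ⊆ [u, v] non-empty, f_γ(x₁, x₂) = exp(−‖x₁ − x₂‖₂² / γ²), and ℒ = { f_γ : γ ∈ Γ } ∪ {0}. Then ∫₀^{1/2} log N(a, ℒ, ‖·‖_∞) da ≤ log(2 + 4 log(v/u)) / 2 + 1. -/

import Mathlib

open Real MeasureTheory

/-- Supremum distance between two real-valued functions. -/
noncomputable def supd {α : Type*} (f g : α → ℝ) : ℝ := ⨆ p, |f p - g p|

/-- `coverNum dd a L` is the minimal cardinality of an `a`-cover of `L` with respect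
to the distance `dd` (a finite subset `F ⊆ L` all of whose closed `a`-balls cover `L`). -/
noncomputable def coverNum {α : Type*} (dd : α → α → ℝ) (a : ℝ) (L : Set α) : ℕ :=
  sInf {m : ℕ | ∃ F : Finset α, F.card = m ∧ ↑F ⊆ L ∧ ∀ x ∈ L, ∃ y ∈ F, dd x y ≤ a}


/-- Pointwise Lipschitz bound: `t ↦ exp (-x * exp t)` is `1`-Lipschitz for `x ≥ 0`. -/
lemma lip_aux (x : ℝ) (hx : 0 ≤ x) (s t : ℝ) :
    |Real.exp (-x * Real.exp s) - Real.exp (-x * Real.exp t)| ≤ |s - t| := by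
  have hd : ∀ r : ℝ, HasDerivAt (fun r => Real.exp (-x * Real.exp r))
      (Real.exp (-x * Real.exp r) * (-x * Real.exp r)) r := by
    intro r
    have h1 : HasDerivAt (fun r => -x * Real.exp r) (-x * Real.exp r) r :=
      (Real.hasDerivAt_exp r).const_mul (-x)
    exact h1.exp
  have hb : ∀ r : ℝ, ‖Real.exp (-x * Real.exp r) * (-x * Real.exp r)‖ ≤ 1 := by
    intro r
    have hy : 0 ≤ x * Real.exp r := mul_nonneg hx (Real.exp_pos r).le
    rw [Real.norm_eq_abs, abs_mul]
    have h1 : |Real.exp (-x * Real.exp r)| = Real.exp (-(x * Real.exp r)) := by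
      rw [abs_of_pos (Real.exp_pos _)]; ring_nf
    have h2 : |(-x * Real.exp r)| = x * Real.exp r := by
      rw [neg_mul, abs_neg, abs_of_nonneg hy]
    rw [h1, h2, Real.exp_neg]
    rw [inv_mul_le_iff₀ (Real.exp_pos _), mul_one]
    calc x * Real.exp r ≤ x * Real.exp r + 1 := by linarith
      _ ≤ Real.exp (x * Real.exp r) := Real.add_one_le_exp _
  have := Convex.norm_image_sub_le_of_norm_hasDerivWithin_le
    (f := fun r => Real.exp (-x * Real.exp r))
    (f' := fun r => Real.exp (-x * Real.exp r) * (-x * Real.exp r)) (C := 1)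
    (s := Set.univ)
    (fun r _ => (hd r).hasDerivWithinAt) (fun r _ => hb r) convex_univ
    (Set.mem_univ t) (Set.mem_univ s)
  simpa [Real.norm_eq_abs] using this

/-- sup-distance bound between two Gaussian-type functions. -/
lemma supd_le_aux {α : Type*} (q : α → ℝ) (hq : ∀ p, 0 ≤ q p) (γ γ' : ℝ)
    (hγ : 0 < γ) (hγ' : 0 < γ') :
    supd (α := α) (fun p => Real.exp (-q p / γ ^ 2)) (fun p => Real.exp (-q p / γ' ^ 2)) ≤
      2 * |Real.log γ - Real.log γ'| := by
  have key : ∀ (g : ℝ), 0 < g → ∀ p, -q p / g ^ 2 = -q p * Real.exp (-(2 * Real.log g)) := by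
    intro g hg p
    have : Real.exp (-(2 * Real.log g)) = (g ^ 2)⁻¹ := by
      rw [Real.exp_neg, two_mul, Real.exp_add, Real.exp_log hg, sq]
    rw [this, div_eq_mul_inv]
  apply Real.iSup_le _ (by positivity)
  intro p
  have h := lip_aux (q p) (hq p) (-(2 * Real.log γ)) (-(2 * Real.log γ'))
  rw [← key γ hγ p, ← key γ' hγ' p] at h
  refine h.trans_eq ?_
  rw [show -(2 * Real.log γ) - -(2 * Real.log γ') = 2 * (Real.log γ' - Real.log γ) by ring,
    abs_mul, abs_sub_comm]
  norm_num


/-- The covering-number bound. -/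
lemma cover_bound {α : Type*} (q : α → ℝ) (hq : ∀ p, 0 ≤ q p)
    (u v : ℝ) (hu : 0 < u) (huv : u ≤ v)
    (Γ : Set ℝ) (hΓne : Γ.Nonempty) (hΓuv : Γ ⊆ Set.Icc u v)
    (L : Set (α → ℝ))
    (hL : L = (fun γ : ℝ => fun p : α => Real.exp (-q p / γ ^ 2)) '' Γ ∪ {0})
    (a : ℝ) (ha : 0 < a) :
    1 ≤ coverNum supd a L ∧ coverNum supd a L ≤ ⌊2 * Real.log (v / u) / a⌋₊ + 2 := by
  classical
  set L0 := Real.log (v / u) with hL0def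
  set K := ⌊2 * L0 / a⌋₊ with hK
  set fγ : ℝ → (α → ℝ) := fun γ p => Real.exp (-q p / γ ^ 2) with hfγ
  set idx : ℝ → ℕ := fun γ => ⌊2 * (Real.log γ - Real.log u) / a⌋₊ with hidx
  have hΓpos : ∀ γ ∈ Γ, 0 < γ := fun γ hγ => lt_of_lt_of_le hu (hΓuv hγ).1
  set rep : ℕ → ℝ := fun k => if h : ∃ γ ∈ Γ, idx γ = k then h.choose else hΓne.choose with hrep
  have hrep_mem : ∀ k, rep k ∈ Γ := by
    intro k
    rw [hrep]
    by_cases h : ∃ γ ∈ Γ, idx γ = k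
    · simp only [dif_pos h]; exact h.choose_spec.1
    · simp only [dif_neg h]; exact hΓne.choose_spec
  set F : Finset (α → ℝ) :=
    insert 0 ((Finset.range (K + 1)).image (fun k => fγ (rep k))) with hF
  have hFsub : ↑F ⊆ L := by
    intro x hx
    rw [hF] at hx
    simp only [Finset.coe_insert, Set.mem_insert_iff, Finset.coe_image, Set.mem_image,
      Finset.mem_coe, Finset.mem_range] at hx
    rcases hx with rfl | ⟨k, _, rfl⟩
    · rw [hL]; exact Set.mem_union_right _ rfl
    · rw [hL]; exact Set.mem_union_left _ ⟨rep k, hrep_mem k, rfl⟩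
  have hcover : ∀ x ∈ L, ∃ y ∈ F, supd x y ≤ a := by
    intro x hx
    rw [hL] at hx
    rcases hx with ⟨γ, hγΓ, rfl⟩ | hx
    · -- x = fγ γ
      have hγpos := hΓpos γ hγΓ
      have hlogd : 0 ≤ Real.log γ - Real.log u :=
        sub_nonneg.2 (Real.log_le_log hu (hΓuv hγΓ).1)
      have hlogv : Real.log γ - Real.log u ≤ L0 := by
        rw [hL0def, Real.log_div (ne_of_gt (lt_of_lt_of_le hu huv)) (ne_of_gt hu)]
        have := Real.log_le_log hγpos (hΓuv hγΓ).2
        linarith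
      have hkK : idx γ ≤ K := by
        rw [hidx, hK]
        apply Nat.floor_mono
        gcongr
      set k := idx γ with hk
      have hex : ∃ γ' ∈ Γ, idx γ' = k := ⟨γ, hγΓ, rfl⟩
      have hrepk : rep k ∈ Γ ∧ idx (rep k) = k := by
        rw [hrep]
        simp only [dif_pos hex]
        exact ⟨hex.choose_spec.1, hex.choose_spec.2⟩
      refine ⟨fγ (rep k), ?_, ?_⟩
      · rw [hF]
        exact Finset.mem_insert_of_mem
          (Finset.mem_image.2 ⟨k, Finset.mem_range.2 (Nat.lt_succ_of_le hkK), rfl⟩)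
      · have hγ'pos := hΓpos _ hrepk.1
        have hlogd' : 0 ≤ Real.log (rep k) - Real.log u :=
          sub_nonneg.2 (Real.log_le_log hu (hΓuv hrepk.1).1)
        have hfl' : ⌊2 * (Real.log (rep k) - Real.log u) / a⌋₊ = k := hrepk.2
        have hfl : ⌊2 * (Real.log γ - Real.log u) / a⌋₊ = k := hk.symm
        have hs1 : (k : ℝ) ≤ 2 * (Real.log γ - Real.log u) / a := by
          conv_lhs => rw [← hfl]
          exact Nat.floor_le (by positivity)
        have hs2 : 2 * (Real.log γ - Real.log u) / a < k + 1 := by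
          conv_rhs => rw [← hfl]
          exact Nat.lt_floor_add_one _
        have ht1 : (k : ℝ) ≤ 2 * (Real.log (rep k) - Real.log u) / a := by
          conv_lhs => rw [← hfl']
          exact Nat.floor_le (by positivity)
        have ht2 : 2 * (Real.log (rep k) - Real.log u) / a < k + 1 := by
          conv_rhs => rw [← hfl']
          exact Nat.lt_floor_add_one _
        have hs1' : (k : ℝ) * a ≤ 2 * (Real.log γ - Real.log u) := (le_div_iff₀ ha).1 hs1
        have hs2' : 2 * (Real.log γ - Real.log u) < ((k : ℝ) + 1) * a := (div_lt_iff₀ ha).1 hs2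
        have ht1' : (k : ℝ) * a ≤ 2 * (Real.log (rep k) - Real.log u) := (le_div_iff₀ ha).1 ht1
        have ht2' : 2 * (Real.log (rep k) - Real.log u) < ((k : ℝ) + 1) * a := (div_lt_iff₀ ha).1 ht2
        have habs' : |Real.log γ - Real.log (rep k)| ≤ a / 2 := by
          rw [abs_sub_le_iff]
          constructor <;> linarith
        have habs : 2 * |Real.log γ - Real.log (rep k)| ≤ a := by linarith
        calc supd (fγ γ) (fγ (rep k)) ≤ 2 * |Real.log γ - Real.log (rep k)| :=
              supd_le_aux q hq γ (rep k) hγpos hγ'pos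
          _ ≤ a := habs
    · -- x = 0
      rcases hx with rfl
      refine ⟨0, Finset.mem_insert_self _ _, ?_⟩
      apply Real.iSup_le _ ha.le
      intro p
      simp [ha.le]
  have hmem : F.card ∈ {m : ℕ | ∃ F' : Finset (α → ℝ), F'.card = m ∧ ↑F' ⊆ L ∧
      ∀ x ∈ L, ∃ y ∈ F', supd x y ≤ a} := ⟨F, rfl, hFsub, hcover⟩
  constructor
  · rw [Nat.one_le_iff_ne_zero]
    intro h0
    have hne : {m : ℕ | ∃ F' : Finset (α → ℝ), F'.card = m ∧ ↑F' ⊆ L ∧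
        ∀ x ∈ L, ∃ y ∈ F', supd x y ≤ a}.Nonempty := ⟨F.card, hmem⟩
    have := Nat.sInf_mem hne
    rw [coverNum] at h0
    rw [h0] at this
    obtain ⟨F', hcard, _, hcov⟩ := this
    have h0L : (0 : α → ℝ) ∈ L := by rw [hL]; exact Set.mem_union_right _ rfl
    obtain ⟨y, hy, -⟩ := hcov 0 h0L
    rw [Finset.card_eq_zero] at hcard
    simp [hcard] at hy
  · calc coverNum supd a L ≤ F.card := Nat.sInf_le hmem
      _ ≤ ((Finset.range (K + 1)).image (fun k => fγ (rep k))).card + 1 := by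
          rw [hF]; exact Finset.card_insert_le _ _
      _ ≤ K + 2 := by
          have := Finset.card_image_le (s := Finset.range (K + 1))
            (f := fun k => fγ (rep k))
          rw [Finset.card_range] at this
          omega

/-- Lemma `lCoverInt`: for `S ⊆ ℝ^d`, `v ≥ u > 0`,
`Γ ⊆ [u,v]` non-empty, `f_γ(x₁,x₂) = exp(−‖x₁−x₂‖₂²/γ²)` and
`ℒ = {f_γ : γ ∈ Γ} ∪ {0}`:
`∫₀^{1/2} log N(a, ℒ, ‖·‖_∞) da ≤ log(2 + 4 log(v/u))/2 + 1`. -/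
theorem stmt_15 {d : ℕ} (S : Set (EuclideanSpace ℝ (Fin d)))
    (u v : ℝ) (hu : 0 < u) (huv : u ≤ v)
    (Γ : Set ℝ) (hΓne : Γ.Nonempty) (hΓuv : Γ ⊆ Set.Icc u v)
    (L : Set (↥S × ↥S → ℝ))
    (hL : L = (fun γ : ℝ => fun p : ↥S × ↥S =>
      Real.exp (-(dist p.1 p.2) ^ 2 / γ ^ 2)) '' Γ ∪ {0}) :
    (∫ a in (0 : ℝ)..(1 / 2 : ℝ), Real.log (coverNum supd a L : ℝ)) ≤
      Real.log (2 + 4 * Real.log (v / u)) / 2 + 1 := by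
  have hL0 : 0 ≤ Real.log (v / u) := Real.log_nonneg ((one_le_div hu).2 huv)
  set C : ℝ := 2 + 4 * Real.log (v / u) with hC
  have hC1 : (1 : ℝ) ≤ C := by rw [hC]; linarith
  have hcb := cover_bound (fun p : ↥S × ↥S => (dist p.1 p.2) ^ 2)
    (fun p => sq_nonneg _) u v hu huv Γ hΓne hΓuv L hL
  have key : ∀ x ∈ Set.Ioc (0:ℝ) (1/2),
      Real.log (coverNum supd x L : ℝ) ≤ (Real.log C - Real.log 2) - Real.log x := by
    intro x hx
    obtain ⟨hN1, hN2⟩ := hcb x hx.1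
    have hx0 := hx.1
    have hNpos : (0:ℝ) < (coverNum supd x L : ℝ) := by exact_mod_cast hN1
    have hN2' : (coverNum supd x L : ℝ) ≤ C / (2 * x) := by
      have h1 : ((⌊2 * Real.log (v/u) / x⌋₊ : ℝ)) ≤ 2 * Real.log (v/u) / x :=
        Nat.floor_le (by positivity)
      have h2 : (coverNum supd x L : ℝ) ≤ (⌊2 * Real.log (v/u) / x⌋₊ : ℝ) + 2 := by
        exact_mod_cast hN2
      have h3 : C / (2 * x) = 1 / x + 2 * Real.log (v/u) / x := by
        rw [hC]; field_simp; ring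
      have h4 : (2 : ℝ) ≤ 1 / x := by
        rw [le_div_iff₀ hx0]; linarith [hx.2]
      linarith
    calc Real.log (coverNum supd x L : ℝ) ≤ Real.log (C / (2 * x)) :=
          Real.log_le_log hNpos hN2'
      _ = Real.log C - Real.log (2 * x) :=
          Real.log_div (by positivity) (by positivity)
      _ = (Real.log C - Real.log 2) - Real.log x := by
          rw [Real.log_mul two_ne_zero (ne_of_gt hx0)]; ring
  -- integrability of log on [0, 1/2]
  have hIntNegLog : IntervalIntegrable (fun x => -Real.log x) volume 0 (1/2) := by
    apply intervalIntegral.intervalIntegrable_deriv_of_nonneg (g := fun x => x - x * Real.log x)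
    · exact (continuous_id.sub Real.continuous_mul_log).continuousOn
    · intro x hx
      rw [show min (0:ℝ) (1/2) = 0 by norm_num, show max (0:ℝ) (1/2) = 1/2 by norm_num] at hx
      have h := (hasDerivAt_id x).sub (Real.hasDerivAt_mul_log (ne_of_gt hx.1))
      rw [show -Real.log x = 1 - (Real.log x + 1) by ring]
      exact h
    · intro x hx
      rw [show min (0:ℝ) (1/2) = 0 by norm_num, show max (0:ℝ) (1/2) = 1/2 by norm_num] at hx
      have : Real.log x ≤ 0 := Real.log_nonpos hx.1.le (by linarith [hx.2])
      linarith
  have hIntLog : IntervalIntegrable Real.log volume 0 (1/2) := by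
    have h := hIntNegLog.neg
    have he : (-fun x => -Real.log x) = Real.log := by funext x; simp
    rwa [he] at h
  have hIntg : IntervalIntegrable (fun x => (Real.log C - Real.log 2) - Real.log x)
      volume 0 (1/2) := intervalIntegrable_const.sub hIntLog
  have hlogint : ∫ x in (0:ℝ)..(1/2), Real.log x = (1/2) * Real.log (1/2) - 1/2 := by
    have h := intervalIntegral.integral_eq_sub_of_hasDeriv_right_of_le
      (f := fun x => x * Real.log x - x) (f' := Real.log)
      (by norm_num : (0:ℝ) ≤ 1/2)
      ((Real.continuous_mul_log.sub continuous_id).continuousOn)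
      (fun x hx => by
        have h := (Real.hasDerivAt_mul_log (ne_of_gt hx.1)).sub (hasDerivAt_id x)
        have h2 : Real.log x + 1 - 1 = Real.log x := by ring
        rw [h2] at h
        exact h.hasDerivWithinAt)
      hIntLog
    rw [h]
    norm_num
  by_cases hI : IntervalIntegrable (fun x => Real.log (coverNum supd x L : ℝ)) volume 0 (1/2)
  · have hae : (fun x => Real.log (coverNum supd x L : ℝ))
        ≤ᵐ[MeasureTheory.volume.restrict (Set.Icc (0:ℝ) (1/2))]
        (fun x => (Real.log C - Real.log 2) - Real.log x) := by
      have h0 : ∀ᵐ (x:ℝ) ∂(MeasureTheory.volume.restrict (Set.Icc (0:ℝ) (1/2))), x ≠ 0 := by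
        apply MeasureTheory.ae_restrict_of_ae
        rw [MeasureTheory.ae_iff]
        simpa using Real.volume_singleton
      have hmem := MeasureTheory.ae_restrict_mem (μ := MeasureTheory.volume)
        (measurableSet_Icc : MeasurableSet (Set.Icc (0:ℝ) (1/2)))
      filter_upwards [h0, hmem] with x hx0 hxm
      exact key x ⟨lt_of_le_of_ne hxm.1 (Ne.symm hx0), hxm.2⟩
    have hle := intervalIntegral.integral_mono_ae_restrict
      (by norm_num : (0:ℝ) ≤ 1/2) hI hIntg hae
    have hgval : (∫ x in (0:ℝ)..(1/2), ((Real.log C - Real.log 2) - Real.log x))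
        = Real.log C / 2 + 1/2 := by
      rw [intervalIntegral.integral_sub intervalIntegrable_const hIntLog,
        intervalIntegral.integral_const, hlogint]
      have : Real.log (1/2) = -Real.log 2 := by
        rw [one_div, Real.log_inv]
      rw [this]
      simp only [smul_eq_mul]
      ring
    rw [hgval] at hle
    have hlog2 : 0 ≤ Real.log 2 := Real.log_nonneg one_le_two
    linarith
  · rw [intervalIntegral.integral_undef hI]
    have : 0 ≤ Real.log C := Real.log_nonneg hC1
    linarith
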